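/- Soft-thresholding of singular values solves the nuclear-norm proximal problem: for any matrix T ∈ ℝ^{n×D} and c > 0, the matrix 𝒯_c(T) = U·diag((σ_i − c)_+)·Vᵀ (where T = U·diag(σ_i)·Vᵀ is the SVD) is the unique minimizer of (1/2)‖M − T‖_F² + c‖M‖_* over M ∈ ℝ^{n×D}. -/

import Mathlib

open Matrix BigOperators MeasureTheory

noncomputable def singVals {m n : ℕ} (S : Matrix (Fin m) (Fin n) ℝ) : Fin n → ℝ :=
  fun i => Real.sqrt (((Matrix.isHermitian_iff_isSymm.mpr (by unfold Matrix.IsSymm; rw [Matrix.transpose_mul, Matrix.transpose_transpose]) : (Sᵀ * S).IsHermitian)).eigenvalues i)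

noncomputable def opNorm {m n : ℕ} (S : Matrix (Fin m) (Fin n) ℝ) : ℝ := ⨆ i, singVals S i

noncomputable def sMin {m n : ℕ} (S : Matrix (Fin m) (Fin n) ℝ) : ℝ := ⨅ i, singVals S i

noncomputable def nuclearNorm {m n : ℕ} (S : Matrix (Fin m) (Fin n) ℝ) : ℝ := ∑ i, singVals S i

noncomputable def frob {m n : ℕ} (S : Matrix (Fin m) (Fin n) ℝ) : ℝ :=
  Real.sqrt (∑ i, ∑ j, (S i j) ^ 2)

section SVTAux

open scoped MatrixOrder

lemma svt_star_eq_transpose' {n : ℕ} (A : Matrix (Fin n) (Fin n) ℝ) : star A = Aᵀ := by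
  ext i j; simp [Matrix.star_apply]

lemma svt_trace_transpose_mul_eq {m n : ℕ} (A B : Matrix (Fin m) (Fin n) ℝ) :
    Matrix.trace (Aᵀ * B) = ∑ i, ∑ j, A i j * B i j := by
  rw [Matrix.trace]
  simp only [diag_apply, mul_apply, transpose_apply]
  rw [Finset.sum_comm]

lemma svt_conj_diag {D : ℕ} (Q B : Matrix (Fin D) (Fin D) ℝ) (j : Fin D) :
    (Qᵀ * B * Q) j j = (fun i => Q i j) ⬝ᵥ (B *ᵥ (fun i => Q i j)) := by
  simp only [mul_apply, transpose_apply, dotProduct, mulVec, Finset.sum_mul, Finset.mul_sum]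
  rw [Finset.sum_comm]
  congr 1; ext i; congr 1; ext l; ring

lemma svt_duality {n D : ℕ} (M Z : Matrix (Fin n) (Fin D) ℝ) (c : ℝ) (hc : 0 ≤ c)
    (hZ : ∀ x : Fin D → ℝ, ∑ i, ((Z *ᵥ x) i) ^ 2 ≤ c ^ 2 * ∑ j, (x j) ^ 2) :
    Matrix.trace (Mᵀ * Z) ≤ c * nuclearNorm M := by
  classical
  have hH : (Mᵀ * M).IsHermitian :=
    Matrix.isHermitian_iff_isSymm.mpr (by unfold Matrix.IsSymm; rw [Matrix.transpose_mul, Matrix.transpose_transpose])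
  set Q : Matrix (Fin D) (Fin D) ℝ := (hH.eigenvectorUnitary : Matrix (Fin D) (Fin D) ℝ) with hQ
  have hQunit : Q * star Q = 1 := hH.eigenvectorUnitary.2.2
  have htr : Matrix.trace (Mᵀ * Z) = Matrix.trace (Qᵀ * (Mᵀ * Z) * Q) := by
    rw [Matrix.trace_mul_cycle, ← Matrix.mul_assoc, ← svt_star_eq_transpose', hQunit,
      Matrix.one_mul]
  rw [htr, Matrix.trace]
  have hbound : ∀ j, (Qᵀ * (Mᵀ * Z) * Q).diag j ≤ c * singVals M j := by
    intro j
    have hq : ∀ i, Q i j = hH.eigenvectorBasis j i := fun i => hH.eigenvectorUnitary_apply i j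
    have hqf : (fun i => Q i j) = ⇑(hH.eigenvectorBasis j) := funext hq
    have hnorm : ∑ i, (Q i j) ^ 2 = 1 := by
      have h1 : (inner (𝕜 := ℝ) (hH.eigenvectorBasis j) (hH.eigenvectorBasis j)) = (1 : ℝ) := by
        rw [real_inner_self_eq_norm_sq, hH.eigenvectorBasis.orthonormal.1 j]; norm_num
      rw [PiLp.inner_apply] at h1
      simp only [RCLike.inner_apply, conj_trivial] at h1
      rw [← h1]; refine Finset.sum_congr rfl fun i _ => by rw [hq i]; ring
    have heig : (Mᵀ * M) *ᵥ (fun i => Q i j) = hH.eigenvalues j • (fun i => Q i j) := by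
      rw [hqf]; exact hH.mulVec_eigenvectorBasis j
    have hMq : ∑ i, ((M *ᵥ fun i => Q i j) i) ^ 2 = hH.eigenvalues j := by
      have : ∑ i, ((M *ᵥ fun i => Q i j) i) ^ 2
          = (fun i => Q i j) ⬝ᵥ ((Mᵀ * M) *ᵥ (fun i => Q i j)) := by
        rw [← Matrix.mulVec_mulVec, Matrix.dotProduct_mulVec, Matrix.vecMul_transpose]
        simp [dotProduct, sq, mul_comm]
      rw [this, heig]
      simp only [dotProduct, Pi.smul_apply, smul_eq_mul]
      calc ∑ x, Q x j * (hH.eigenvalues j * Q x j)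
          = hH.eigenvalues j * ∑ x, (Q x j) ^ 2 := by
            rw [Finset.mul_sum]; exact Finset.sum_congr rfl fun x _ => by ring
        _ = hH.eigenvalues j := by rw [hnorm, mul_one]
    calc (Qᵀ * (Mᵀ * Z) * Q).diag j
        = (M *ᵥ fun i => Q i j) ⬝ᵥ (Z *ᵥ fun i => Q i j) := by
          rw [Matrix.diag_apply, svt_conj_diag, ← Matrix.mulVec_mulVec,
            Matrix.dotProduct_mulVec, Matrix.vecMul_transpose]
      _ ≤ Real.sqrt (∑ i, ((M *ᵥ fun i => Q i j) i) ^ 2) *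
            Real.sqrt (∑ i, ((Z *ᵥ fun i => Q i j) i) ^ 2) :=
          Real.sum_mul_le_sqrt_mul_sqrt _ _ _
      _ ≤ Real.sqrt (hH.eigenvalues j) * c := by
          rw [hMq]
          refine mul_le_mul_of_nonneg_left ?_ (Real.sqrt_nonneg _)
          calc Real.sqrt (∑ i, ((Z *ᵥ fun i => Q i j) i) ^ 2)
              ≤ Real.sqrt (c ^ 2 * ∑ i, (Q i j) ^ 2) := Real.sqrt_le_sqrt (hZ _)
            _ = c := by rw [hnorm, mul_one, Real.sqrt_sq hc]
      _ = c * singVals M j := by rw [singVals, mul_comm]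
  calc ∑ j, (Qᵀ * (Mᵀ * Z) * Q).diag j ≤ ∑ j, c * singVals M j :=
        Finset.sum_le_sum fun j _ => hbound j
    _ = c * nuclearNorm M := by rw [nuclearNorm, Finset.mul_sum]

lemma svt_dot_self_mulVec {n D : ℕ} (S : Matrix (Fin n) (Fin D) ℝ) (x : Fin D → ℝ) :
    ∑ i, ((S *ᵥ x) i) ^ 2 = x ⬝ᵥ ((Sᵀ * S) *ᵥ x) := by
  rw [← Matrix.mulVec_mulVec, Matrix.dotProduct_mulVec, Matrix.vecMul_transpose]
  simp [dotProduct, sq, mul_comm]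

lemma svt_UDV_transpose_mul {n D k : ℕ} (U : Matrix (Fin n) (Fin k) ℝ)
    (V : Matrix (Fin D) (Fin k) ℝ) (a b : Fin k → ℝ) (hU : Uᵀ * U = 1) :
    (U * diagonal a * Vᵀ)ᵀ * (U * diagonal b * Vᵀ) = V * diagonal (fun i => a i * b i) * Vᵀ := by
  simp only [Matrix.transpose_mul, Matrix.transpose_transpose, Matrix.diagonal_transpose,
    Matrix.mul_assoc]
  rw [← Matrix.mul_assoc Uᵀ U, hU, Matrix.one_mul, ← Matrix.mul_assoc (diagonal a) (diagonal b),
    Matrix.diagonal_mul_diagonal, ← Matrix.mul_assoc]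

lemma svt_opnorm_bound {n D k : ℕ} (U : Matrix (Fin n) (Fin k) ℝ) (V : Matrix (Fin D) (Fin k) ℝ)
    (m : Fin k → ℝ) (c : ℝ) (hc : 0 ≤ c) (hU : Uᵀ * U = 1) (hV : Vᵀ * V = 1)
    (hm : ∀ i, 0 ≤ m i ∧ m i ≤ c) (x : Fin D → ℝ) :
    ∑ i, (((U * diagonal m * Vᵀ) *ᵥ x) i) ^ 2 ≤ c ^ 2 * ∑ j, (x j) ^ 2 := by
  rw [svt_dot_self_mulVec, svt_UDV_transpose_mul U V m m hU]
  have hsplit : x ⬝ᵥ ((V * diagonal (fun i => m i * m i) * Vᵀ) *ᵥ x)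
      = ∑ i, (m i * m i) * ((Vᵀ *ᵥ x) i) ^ 2 := by
    rw [← Matrix.mulVec_mulVec, ← Matrix.mulVec_mulVec, Matrix.dotProduct_mulVec x V,
      ← Matrix.transpose_transpose V, Matrix.vecMul_transpose, Matrix.transpose_transpose]
    simp only [dotProduct, Matrix.mulVec_diagonal]
    exact Finset.sum_congr rfl fun i _ => by ring
  rw [hsplit]
  have h1 : ∑ i, (m i * m i) * ((Vᵀ *ᵥ x) i) ^ 2 ≤ c ^ 2 * ∑ i, ((Vᵀ *ᵥ x) i) ^ 2 := by
    rw [Finset.mul_sum]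
    refine Finset.sum_le_sum fun i _ => ?_
    have h0 := hm i
    have h2 : m i * m i ≤ c ^ 2 := by nlinarith [h0.1, h0.2]
    exact mul_le_mul_of_nonneg_right h2 (sq_nonneg _)
  refine h1.trans ?_
  have hproj : ∑ i, ((Vᵀ *ᵥ x) i) ^ 2 ≤ ∑ j, (x j) ^ 2 := by
    have key : ∑ j, (x j) ^ 2 - ∑ i, ((Vᵀ *ᵥ x) i) ^ 2
        = ∑ j, (((1 - V * Vᵀ) *ᵥ x) j) ^ 2 := by
      have hP : ((1 : Matrix (Fin D) (Fin D) ℝ) - V * Vᵀ)ᵀ * (1 - V * Vᵀ) = 1 - V * Vᵀ := by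
        have ht : ((1 : Matrix (Fin D) (Fin D) ℝ) - V * Vᵀ)ᵀ = 1 - V * Vᵀ := by
          simp [Matrix.transpose_sub, Matrix.transpose_mul]
        have hVV : (V * Vᵀ) * (V * Vᵀ) = V * Vᵀ := by
          calc (V * Vᵀ) * (V * Vᵀ) = V * (Vᵀ * V) * Vᵀ := by simp only [Matrix.mul_assoc]
            _ = V * Vᵀ := by rw [hV, Matrix.mul_one]
        rw [ht]
        simp only [Matrix.sub_mul, Matrix.mul_sub, Matrix.one_mul, Matrix.mul_one, hVV]
        abel
      rw [svt_dot_self_mulVec (1 - V * Vᵀ) x, hP]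
      rw [Matrix.sub_mulVec, Matrix.one_mulVec, dotProduct_sub]
      have hxx : x ⬝ᵥ x = ∑ j, (x j) ^ 2 := by simp [dotProduct, sq]
      have hvv : x ⬝ᵥ ((V * Vᵀ) *ᵥ x) = ∑ i, ((Vᵀ *ᵥ x) i) ^ 2 := by
        rw [← Matrix.mulVec_mulVec, Matrix.dotProduct_mulVec x V,
          ← Matrix.transpose_transpose V, Matrix.vecMul_transpose, Matrix.transpose_transpose]
        simp [dotProduct, sq, mul_comm]
      rw [hxx, hvv]
    nlinarith [key, Finset.sum_nonneg (fun j (_ : j ∈ Finset.univ) =>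
      sq_nonneg (((1 - V * Vᵀ) *ᵥ x) j))]
  exact mul_le_mul_of_nonneg_left hproj (sq_nonneg c)

lemma svt_trace_VDV {D k : ℕ} (V : Matrix (Fin D) (Fin k) ℝ) (hV : Vᵀ * V = 1) (a : Fin k → ℝ) :
    Matrix.trace (V * diagonal a * Vᵀ) = ∑ i, a i := by
  rw [Matrix.trace_mul_cycle, hV, Matrix.one_mul, Matrix.trace_diagonal]

lemma svt_trace_sqrt {D : ℕ} {B : Matrix (Fin D) (Fin D) ℝ} (hB : B.PosSemidef) :
    Matrix.trace (CFC.sqrt B) = ∑ i, Real.sqrt (hB.1.eigenvalues i) := by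
  rw [CFC.sqrt_eq_cfc, cfc_nnreal_eq_real _ B, hB.1.cfc_eq, IsHermitian.cfc,
    Unitary.conjStarAlgAut_apply, Matrix.trace_mul_cycle]
  have h1 : star (hB.1.eigenvectorUnitary : Matrix (Fin D) (Fin D) ℝ) *
      (hB.1.eigenvectorUnitary : Matrix (Fin D) (Fin D) ℝ) = 1 := hB.1.eigenvectorUnitary.2.1
  rw [h1, Matrix.one_mul, Matrix.trace_diagonal]
  simp [RCLike.ofReal]
  exact Finset.sum_congr rfl fun i _ => by rw [max_eq_left (hB.eigenvalues_nonneg i)]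

lemma svt_nuclear_UDV {n D k : ℕ} (U : Matrix (Fin n) (Fin k) ℝ) (V : Matrix (Fin D) (Fin k) ℝ)
    (a : Fin k → ℝ) (hU : Uᵀ * U = 1) (hV : Vᵀ * V = 1) (ha : ∀ i, 0 ≤ a i) :
    nuclearNorm (U * diagonal a * Vᵀ) = ∑ i, a i := by
  set S := U * diagonal a * Vᵀ with hS
  have hBps : (Sᵀ * S).PosSemidef := by
    have := Matrix.posSemidef_conjTranspose_mul_self S
    rwa [Matrix.conjTranspose_eq_transpose_of_trivial] at this
  set C := V * diagonal a * Vᵀ with hC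
  have hCps : C.PosSemidef := by
    have key : (diagonal (fun i => Real.sqrt (a i)) * Vᵀ)ᴴ *
        (diagonal (fun i => Real.sqrt (a i)) * Vᵀ) = C := by
      rw [Matrix.conjTranspose_eq_transpose_of_trivial, Matrix.transpose_mul,
        Matrix.transpose_transpose, Matrix.diagonal_transpose]
      calc V * diagonal (fun i => Real.sqrt (a i)) *
            (diagonal (fun i => Real.sqrt (a i)) * Vᵀ)
          = V * (diagonal (fun i => Real.sqrt (a i)) * diagonal (fun i => Real.sqrt (a i))) * Vᵀ
            := by simp only [Matrix.mul_assoc]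
        _ = C := by
            rw [Matrix.diagonal_mul_diagonal,
              show (fun i => Real.sqrt (a i) * Real.sqrt (a i)) = a from
                funext fun i => Real.mul_self_sqrt (ha i), hC]
    rw [← key]
    exact Matrix.posSemidef_conjTranspose_mul_self _
  have hsq : C ^ 2 = Sᵀ * S := by
    rw [pow_two, hC, hS, svt_UDV_transpose_mul U V a a hU]
    calc V * diagonal a * Vᵀ * (V * diagonal a * Vᵀ)
        = V * diagonal a * (Vᵀ * V) * diagonal a * Vᵀ := by simp only [Matrix.mul_assoc]
      _ = V * (diagonal a * diagonal a) * Vᵀ := by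
          rw [hV, Matrix.mul_one, Matrix.mul_assoc V, Matrix.mul_assoc V, Matrix.mul_assoc]
      _ = V * diagonal (fun i => a i * a i) * Vᵀ := by rw [Matrix.diagonal_mul_diagonal]
  have hCeq : C = CFC.sqrt (Sᵀ * S) :=
    (CFC.sq_eq_sq_iff C (CFC.sqrt _) hCps.nonneg (CFC.sqrt_nonneg _)).mp
      (by rw [CFC.sq_sqrt _ hBps.nonneg, hsq])
  have h1 : Matrix.trace C = ∑ i, a i := svt_trace_VDV V hV a
  have h2 : Matrix.trace (CFC.sqrt (Sᵀ * S)) = nuclearNorm S := by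
    rw [svt_trace_sqrt hBps]; rfl
  rw [← h2, ← hCeq, h1]

lemma svt_sum2_expand {n D : ℕ} (A B : Matrix (Fin n) (Fin D) ℝ) :
    ∑ i, ∑ j, (A i j + B i j) ^ 2
      = (∑ i, ∑ j, (A i j) ^ 2) + (∑ i, ∑ j, (B i j) ^ 2)
        + 2 * ∑ i, ∑ j, A i j * B i j := by
  rw [Finset.mul_sum, ← Finset.sum_add_distrib, ← Finset.sum_add_distrib]
  refine Finset.sum_congr rfl fun i _ => ?_
  rw [Finset.mul_sum, ← Finset.sum_add_distrib, ← Finset.sum_add_distrib]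
  refine Finset.sum_congr rfl fun j _ => by ring

lemma svt_frob_sq {n D : ℕ} (S : Matrix (Fin n) (Fin D) ℝ) :
    frob S ^ 2 = ∑ i, ∑ j, (S i j) ^ 2 := by
  rw [frob, Real.sq_sqrt]
  exact Finset.sum_nonneg fun i _ => Finset.sum_nonneg fun j _ => sq_nonneg _

end SVTAux

/-- Singular value soft-thresholding solves the nuclear-norm proximal problem:
    𝒯_c(T) = U diag((σᵢ−c)₊) Vᵀ is the unique minimizer of
    (1/2)‖M−T‖_F² + c‖M‖_*. -/
theorem svt_prox {n D k : ℕ} (T : Matrix (Fin n) (Fin D) ℝ) (c : ℝ) (hc : 0 < c)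
    (U : Matrix (Fin n) (Fin k) ℝ) (V : Matrix (Fin D) (Fin k) ℝ) (σ : Fin k → ℝ)
    (hU : Uᵀ * U = 1) (hV : Vᵀ * V = 1) (hσ : ∀ i, 0 ≤ σ i)
    (hT : T = U * Matrix.diagonal σ * Vᵀ) :
    (∀ M : Matrix (Fin n) (Fin D) ℝ,
      (1 / 2) * frob (U * Matrix.diagonal (fun i => max (σ i - c) 0) * Vᵀ - T) ^ 2
          + c * nuclearNorm (U * Matrix.diagonal (fun i => max (σ i - c) 0) * Vᵀ)
        ≤ (1 / 2) * frob (M - T) ^ 2 + c * nuclearNorm M) ∧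
    (∀ M : Matrix (Fin n) (Fin D) ℝ,
      (1 / 2) * frob (M - T) ^ 2 + c * nuclearNorm M
          = (1 / 2) * frob (U * Matrix.diagonal (fun i => max (σ i - c) 0) * Vᵀ - T) ^ 2
            + c * nuclearNorm (U * Matrix.diagonal (fun i => max (σ i - c) 0) * Vᵀ)
        → M = U * Matrix.diagonal (fun i => max (σ i - c) 0) * Vᵀ) := by
  set g : Fin k → ℝ := fun i => max (σ i - c) 0 with hg
  set X : Matrix (Fin n) (Fin D) ℝ := U * Matrix.diagonal g * Vᵀ with hX
  set m : Fin k → ℝ := fun i => σ i - g i with hmdef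
  set Z : Matrix (Fin n) (Fin D) ℝ := U * Matrix.diagonal m * Vᵀ with hZdef
  have hgnn : ∀ i, 0 ≤ g i := fun i => le_max_right _ _
  have hmbound : ∀ i, 0 ≤ m i ∧ m i ≤ c := by
    intro i
    constructor
    · simp only [hmdef, hg]
      rcases le_or_gt (σ i) c with h | h
      · rw [max_eq_right (by linarith)]; linarith [hσ i]
      · rw [max_eq_left (by linarith)]; linarith
    · simp only [hmdef, hg]
      rcases le_or_gt (σ i) c with h | h
      · rw [max_eq_right (by linarith)]; linarith [hσ i]
      · rw [max_eq_left (by linarith)]; linarith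
  have hXT : X - T = -Z := by
    rw [hX, hZdef, hT]
    have hdd : Matrix.diagonal g - Matrix.diagonal σ = -(Matrix.diagonal m) := by
      have hdm : Matrix.diagonal m = Matrix.diagonal σ - Matrix.diagonal g := by
        rw [Matrix.diagonal_sub]
      rw [hdm, neg_sub]
    calc U * Matrix.diagonal g * Vᵀ - U * Matrix.diagonal σ * Vᵀ
        = U * (Matrix.diagonal g - Matrix.diagonal σ) * Vᵀ := by
          rw [Matrix.mul_sub, Matrix.sub_mul]
      _ = -(U * Matrix.diagonal m * Vᵀ) := by rw [hdd, Matrix.mul_neg, Matrix.neg_mul]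
  -- the nuclear norm of X
  have hNX : nuclearNorm X = ∑ i, g i := svt_nuclear_UDV U V g hU hV hgnn
  -- ⟨X, Z⟩ = c * ‖X‖_*
  have hXZ : Matrix.trace (Xᵀ * Z) = c * nuclearNorm X := by
    rw [hX, hZdef, svt_UDV_transpose_mul U V g m hU, svt_trace_VDV V hV, hNX, Finset.mul_sum]
    refine Finset.sum_congr rfl fun i _ => ?_
    simp only [hmdef, hg]
    rcases le_or_gt (σ i) c with h | h
    · rw [max_eq_right (by linarith)]; ring
    · rw [max_eq_left (by linarith)]; ring
  -- duality bound
  have hdual : ∀ M : Matrix (Fin n) (Fin D) ℝ,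
      Matrix.trace (Mᵀ * Z) ≤ c * nuclearNorm M := by
    intro M
    exact svt_duality M Z c hc.le (fun x => svt_opnorm_bound U V m c hc.le hU hV hmbound x)
  -- the master inequality
  have key : ∀ M : Matrix (Fin n) (Fin D) ℝ,
      (1 / 2) * frob (X - T) ^ 2 + c * nuclearNorm X
          + (1 / 2) * (∑ i, ∑ j, ((M - X) i j) ^ 2)
        ≤ (1 / 2) * frob (M - T) ^ 2 + c * nuclearNorm M := by
    intro M
    have hexp : frob (M - T) ^ 2 = frob (X - T) ^ 2 + (∑ i, ∑ j, ((M - X) i j) ^ 2)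
        + 2 * Matrix.trace ((M - X)ᵀ * (X - T)) := by
      rw [svt_frob_sq, svt_frob_sq, svt_trace_transpose_mul_eq]
      have hMT : M - T = (M - X) + (X - T) := by abel
      rw [hMT]
      have : ∀ i j, ((M - X) + (X - T)) i j = (M - X) i j + (X - T) i j := fun i j => rfl
      simp only [this]
      rw [svt_sum2_expand]
      ring
    have htr : Matrix.trace ((M - X)ᵀ * (X - T))
        = c * nuclearNorm X - Matrix.trace (Mᵀ * Z) := by
      rw [hXT, Matrix.mul_neg, Matrix.trace_neg, Matrix.transpose_sub, Matrix.sub_mul,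
        Matrix.trace_sub, hXZ]
      ring
    have hd := hdual M
    rw [hexp, htr]
    ring_nf
    nlinarith [hd]
  constructor
  · intro M
    have h1 := key M
    have h2 : 0 ≤ ∑ i, ∑ j, ((M - X) i j) ^ 2 :=
      Finset.sum_nonneg fun i _ => Finset.sum_nonneg fun j _ => sq_nonneg _
    linarith
  · intro M hMeq
    have h1 := key M
    have h2 : 0 ≤ ∑ i, ∑ j, ((M - X) i j) ^ 2 :=
      Finset.sum_nonneg fun i _ => Finset.sum_nonneg fun j _ => sq_nonneg _
    have h3 : ∑ i, ∑ j, ((M - X) i j) ^ 2 = 0 := by linarith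
    have h4 : ∀ i ∈ (Finset.univ : Finset (Fin n)), ∑ j, ((M - X) i j) ^ 2 = 0 :=
      (Finset.sum_eq_zero_iff_of_nonneg fun i _ =>
        Finset.sum_nonneg fun j _ => sq_nonneg _).mp h3
    have h5 : ∀ i j, (M - X) i j = 0 := by
      intro i j
      have := (Finset.sum_eq_zero_iff_of_nonneg fun j _ => sq_nonneg ((M - X) i j)).mp
        (h4 i (Finset.mem_univ i)) j (Finset.mem_univ j)
      exact (pow_eq_zero_iff two_ne_zero).mp this
    have h6 : M - X = 0 := by ext i j; exact h5 i j
    have := sub_eq_zero.mp h6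
    rw [this]
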